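/- Let V be a linear subspace of ℝⁿ, w ∈ ℝⁿ fixed, K : ℝ → (n×n symmetric real matrices) differentiable, and U : ℝ → ℝⁿ differentiable with U(t) − w ∈ V for all t and such that the equilibrium (stationarity) condition holds: K(t)·U(t) is orthogonal to V for all t. Then the strain energy e(t) = (1/2)·U(t)ᵀ·K(t)·U(t) is differentiable with de/dt = (1/2)·U(t)ᵀ·(dK/dt)(t)·U(t). -/

import Mathlib

/-- Sensitivity of the strain energy under prescribed boundary displacements:
if the admissible displacements form the affine subspace `w + V`, the stiffness
matrix `K(t)` is symmetric and differentiable (entrywise) in the design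
parameter, the equilibrium displacement `U(t)` satisfies `U(t) − w ∈ V` and
`K(t)·U(t) ⊥ V`, then `e(t) = (1/2)·U(t)ᵀ·K(t)·U(t)` is differentiable with
`de/dt = (1/2)·U(t)ᵀ·(dK/dt)·U(t)`. -/
theorem strain_energy_sensitivity (n : ℕ)
    (V : Submodule ℝ (Fin n → ℝ)) (w : Fin n → ℝ)
    (K : ℝ → Matrix (Fin n) (Fin n) ℝ)
    (hKsymm : ∀ t : ℝ, (K t).IsSymm)
    (hKdiff : ∀ i j : Fin n, Differentiable ℝ fun t : ℝ => K t i j)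
    (U : ℝ → (Fin n → ℝ))
    (hUdiff : Differentiable ℝ U)
    (hUadm : ∀ t : ℝ, U t - w ∈ V)
    (hequil : ∀ t : ℝ, ∀ v ∈ V, dotProduct ((K t).mulVec (U t)) v = 0)
    (e : ℝ → ℝ)
    (he : ∀ t : ℝ, e t = (1 / 2) * dotProduct (U t) ((K t).mulVec (U t))) :
    Differentiable ℝ e ∧
      ∀ t : ℝ,
        deriv e t =
          (1 / 2) *
            dotProduct (U t)
              ((Matrix.of fun i j => deriv (fun s : ℝ => K s i j) t).mulVec (U t)) := by
  -- main claim: at each t, e has the stated derivative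
  have key : ∀ t : ℝ, HasDerivAt e
      ((1 / 2) * dotProduct (U t)
        ((Matrix.of fun i j => deriv (fun s : ℝ => K s i j) t).mulVec (U t))) t := by
    intro t
    set g : ℝ → (Fin n → ℝ) := fun s => U s - w with hg_def
    have hg : Differentiable ℝ g := hUdiff.sub_const w
    set d : Fin n → ℝ := deriv g t with hd_def
    have hgd : HasDerivAt g d t := (hg t).hasDerivAt
    -- d ∈ V since V is closed and slopes are in V
    have hdV : d ∈ V := by
      have hclosed : IsClosed (V : Set (Fin n → ℝ)) :=
        Submodule.closed_of_finiteDimensional V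
      have htend := hasDerivAt_iff_tendsto_slope.mp hgd
      refine hclosed.mem_of_tendsto htend ?_
      filter_upwards with y
      exact V.smul_mem _ (V.sub_mem (hUadm y) (hUadm t))
    have hUd : HasDerivAt U d t := by
      have := hgd.add_const w
      simpa [hg_def, sub_add_cancel] using this
    have hUi : ∀ i, HasDerivAt (fun s => U s i) (d i) t := by
      intro i
      exact ((ContinuousLinearMap.proj i : (Fin n → ℝ) →L[ℝ] ℝ).hasFDerivAt.comp_hasDerivAt
        t hUd)
    set K' : Matrix (Fin n) (Fin n) ℝ := Matrix.of fun i j => deriv (fun s : ℝ => K s i j) t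
      with hK'_def
    have hKij : ∀ i j, HasDerivAt (fun s => K s i j) (K' i j) t := fun i j =>
      ((hKdiff i j) t).hasDerivAt
    -- derivative of f s = ∑ i, U s i * ∑ j, K s i j * U s j
    have hf : HasDerivAt (fun s => ∑ i, U s i * ∑ j, K s i j * U s j)
        (∑ i, (d i * (∑ j, K t i j * U t j) +
          U t i * (∑ j, (K' i j * U t j + K t i j * d j)))) t := by
      apply HasDerivAt.fun_sum
      intro i _
      exact (hUi i).mul (HasDerivAt.fun_sum fun j _ => (hKij i j).mul (hUi j))
    -- vanishing of the terms with d
    have h1 : ∑ i, d i * ∑ j, K t i j * U t j = 0 := by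
      have := hequil t d hdV
      have hsym : dotProduct ((K t).mulVec (U t)) d
          = dotProduct d ((K t).mulVec (U t)) := dotProduct_comm _ _
      rw [hsym] at this
      simpa [dotProduct, Matrix.mulVec] using this
    have h2 : ∑ i, U t i * ∑ j, K t i j * d j = 0 := by
      have heq : dotProduct (U t) ((K t).mulVec d)
          = dotProduct ((K t).mulVec (U t)) d := by
        rw [Matrix.dotProduct_mulVec]
        congr 1
        rw [← Matrix.mulVec_transpose, (hKsymm t).eq]
      have := hequil t d hdV
      rw [← heq] at this
      simpa [dotProduct, Matrix.mulVec] using this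
    have hval : (∑ i, (d i * (∑ j, K t i j * U t j) +
          U t i * (∑ j, (K' i j * U t j + K t i j * d j))))
        = dotProduct (U t) (K'.mulVec (U t)) := by
      have step : (∑ i, (d i * (∑ j, K t i j * U t j) +
          U t i * (∑ j, (K' i j * U t j + K t i j * d j))))
          = (∑ i, d i * ∑ j, K t i j * U t j) +
            ((∑ i, U t i * ∑ j, K' i j * U t j) +
              ∑ i, U t i * ∑ j, K t i j * d j) := by
        simp [Finset.sum_add_distrib, mul_add]
      rw [step, h1, h2, zero_add, add_zero]
      simp [dotProduct, Matrix.mulVec]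
    have hfe : HasDerivAt e ((1/2) * dotProduct (U t) (K'.mulVec (U t))) t := by
      have : HasDerivAt (fun s => (1/2 : ℝ) * ∑ i, U s i * ∑ j, K s i j * U s j)
          ((1/2) * dotProduct (U t) (K'.mulVec (U t))) t := by
        rw [← hval]
        exact hf.const_mul _
      refine this.congr_of_eventuallyEq ?_
      filter_upwards with s
      rw [he s]
      simp [dotProduct, Matrix.mulVec, Finset.mul_sum]
    exact hfe
  constructor
  · exact fun t => (key t).differentiableAt
  · exact fun t => (key t).deriv
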